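/- Let ≻ be a preference over a finite set A of alternatives, let x,y ∈ A be distinct, and let δ ≥ 0 be an integer. Then there exists a preference ≻' over A with d_KT(≻,≻') ≤ δ and y ≻' x if and only if y ≻ x or rank(≻,y) − rank(≻,x) ≤ δ. -/

import Mathlib

open Finset

abbrev Pref (A : Type*) [Fintype A] := A ≃ Fin (Fintype.card A)

def prefers {A : Type*} [Fintype A] (p : Pref A) (x y : A) : Prop := p x < p y

instance {A : Type*} [Fintype A] (p : Pref A) (x y : A) : Decidable (prefers p x y) := by
  unfold prefers; infer_instance

def rank {A : Type*} [Fintype A] (p : Pref A) (a : A) : ℕ := (p a : ℕ) + 1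

def dKT {A : Type*} [Fintype A] (p q : Pref A) : ℕ :=
  (univ.filter (fun z : A × A => prefers p z.1 z.2 ∧ prefers q z.2 z.1)).card

def margin {A : Type*} [Fintype A] {n : ℕ} (P : Fin n → Pref A) (x y : A) : ℤ :=
  ((univ.filter (fun i => prefers (P i) x y)).card : ℤ) -
  ((univ.filter (fun i => prefers (P i) y x)).card : ℤ)

def Sk {A : Type*} [Fintype A] {n : ℕ} (k : ℕ) (P : Fin n → Pref A) (a : A) : ℕ :=
  (univ.filter (fun i => ((P i) a : ℕ) < k)).card

noncomputable def buckLevel {A : Type*} [Fintype A] {n : ℕ} (P : Fin n → Pref A) : ℕ :=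
  sInf {k : ℕ | ∃ a : A, n < 2 * Sk k P a}

def movePerm : {m : ℕ} → Fin m → Fin m → Equiv.Perm (Fin m)
  | 0, i, _ => i.elim0
  | _ + 1, i, j => (finSuccEquiv' i).trans (finSuccEquiv' j).symm

def RS {A : Type*} [Fintype A] (p : Pref A) (a : A) (k : ℕ) : Pref A :=
  p.trans (movePerm (p a) ⟨min ((p a : ℕ) + k) (Fintype.card A - 1),
    lt_of_le_of_lt (min_le_right _ _) (Nat.sub_lt (Fin.pos (p a)) one_pos)⟩)

def LS {A : Type*} [Fintype A] (p : Pref A) (a : A) (k : ℕ) : Pref A :=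
  p.trans (movePerm (p a) ⟨(p a : ℕ) - k,
    lt_of_le_of_lt (Nat.sub_le _ _) (p a).isLt⟩)

def feasSet {A : Type*} [Fintype A] [DecidableEq A] (p : Pref A) (δ : ℕ) : Finset (Pref A) :=
  univ.filter (fun q => dKT p q ≤ δ)

lemma dKT_self {A : Type*} [Fintype A] (p : Pref A) : dKT p p = 0 := by
  rw [dKT, Finset.card_eq_zero, Finset.filter_eq_empty_iff]
  rintro z -
  rintro ⟨h1, h2⟩
  exact absurd ((show p z.1 < p z.2 from h1).trans h2) (lt_irrefl _)

lemma feasSet_nonempty {A : Type*} [Fintype A] [DecidableEq A] (p : Pref A) (δ : ℕ) :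
    (feasSet p δ).Nonempty :=
  ⟨p, by simp [feasSet, dKT_self]⟩

lemma coe_succAbove' {n : ℕ} (pp : Fin (n+1)) (s : Fin n) :
    (pp.succAbove s : ℕ) = if (s:ℕ) < (pp:ℕ) then (s:ℕ) else (s:ℕ)+1 := by
  rcases lt_or_ge (Fin.castSucc s) pp with h | h
  · rw [Fin.succAbove_of_castSucc_lt _ _ h, if_pos (by simpa [Fin.lt_def] using h)]; simp
  · rw [Fin.succAbove_of_le_castSucc _ _ h, if_neg (by simpa [Fin.le_def, Nat.not_lt] using h),
      Fin.val_succ]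

lemma movePerm_apply_self {m : ℕ} (i j : Fin m) : movePerm i j i = j := by
  cases m with
  | zero => exact i.elim0
  | succ n => simp [movePerm]

lemma movePerm_coe {m : ℕ} (i j t : Fin m) (ht : t ≠ i) (hji : (j:ℕ) ≤ (i:ℕ)) :
    (movePerm i j t : ℕ) = if (t:ℕ) < (j:ℕ) ∨ (i:ℕ) < (t:ℕ) then (t:ℕ) else (t:ℕ)+1 := by
  cases m with
  | zero => exact i.elim0
  | succ n =>
    obtain ⟨s, rfl⟩ := Fin.exists_succAbove_eq ht
    have h1 : movePerm i j (i.succAbove s) = j.succAbove s := by simp [movePerm]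
    rw [h1, coe_succAbove' j s, coe_succAbove' i s]
    split_ifs <;> omega

theorem exists_close_pref_swapping_pair_iff {A : Type*} [Fintype A] [DecidableEq A]
    (p : Pref A) (x y : A) (hxy : x ≠ y) (δ : ℕ) :
    (∃ q : Pref A, dKT p q ≤ δ ∧ prefers q y x) ↔
      (prefers p y x ∨ (rank p y : ℤ) - (rank p x : ℤ) ≤ (δ : ℤ)) := by
  have hm : 0 < Fintype.card A := Fintype.card_pos_iff.mpr ⟨x⟩
  have hne : (p x : ℕ) ≠ (p y : ℕ) := fun h => hxy (p.injective (Fin.val_injective h))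
  constructor
  · rintro ⟨q, hq, hqyx⟩
    by_cases hp : prefers p y x
    · exact Or.inl hp
    right
    have hqlt : (q y : ℕ) < (q x : ℕ) := hqyx
    have hpxy : (p x : ℕ) < (p y : ℕ) := by
      have : ¬ ((p y : ℕ) < (p x : ℕ)) := hp
      omega
    set T : Finset A := Finset.univ.filter
      (fun z => (p x : ℕ) ≤ (p z : ℕ) ∧ (p z : ℕ) < (p y : ℕ)) with hT
    have hcard : (p y : ℕ) - (p x : ℕ) ≤ T.card := by
      have hIco : (Finset.Ico (p x : ℕ) (p y : ℕ)).card = (p y : ℕ) - (p x : ℕ) :=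
        Nat.card_Ico _ _
      rw [← hIco]
      apply Finset.card_le_card_of_injOn
        (fun t => p.symm ⟨min t (Fintype.card A - 1),
          Nat.lt_of_le_of_lt (Nat.min_le_right _ _) (Nat.sub_lt hm one_pos)⟩)
      · intro t htm
        rw [Finset.mem_coe, Finset.mem_Ico] at htm
        have htl : t < Fintype.card A := lt_trans htm.2 (p y).isLt
        have hmin : min t (Fintype.card A - 1) = t := by omega
        simp only [Finset.mem_coe, hT, Finset.mem_filter]
        refine ⟨Finset.mem_univ _, ?_⟩
        rw [Equiv.apply_symm_apply]
        simp only [hmin]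
        exact htm
      · intro t1 h1 t2 h2 heq
        rw [Finset.mem_coe, Finset.mem_Ico] at h1 h2
        have e := congrArg p heq
        rw [Equiv.apply_symm_apply, Equiv.apply_symm_apply, Fin.mk.injEq] at e
        have ht1 : t1 < Fintype.card A := lt_trans h1.2 (p y).isLt
        have ht2 : t2 < Fintype.card A := lt_trans h2.2 (p y).isLt
        omega
    have hTD : T.card ≤ dKT p q := by
      rw [dKT]
      apply Finset.card_le_card_of_injOn (fun z => if q z < q x then (x, z) else (z, y))
      · intro z hz
        simp only [Finset.mem_coe, hT, Finset.mem_filter] at hz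
        obtain ⟨-, hz1, hz2⟩ := hz
        by_cases hc : q z < q x
        · simp only [if_pos hc, Finset.mem_coe, Finset.mem_filter]
          refine ⟨Finset.mem_univ _, ?_, hc⟩
          show p x < p z
          rw [Fin.lt_def]
          rcases Nat.lt_or_ge (p x : ℕ) (p z : ℕ) with h | h
          · exact h
          · exfalso
            have : (p x : ℕ) = (p z : ℕ) := le_antisymm hz1 h
            have : x = z := p.injective (Fin.val_injective this)
            subst this
            exact lt_irrefl _ hc
        · simp only [if_neg hc, Finset.mem_coe, Finset.mem_filter]
          refine ⟨Finset.mem_univ _, ?_, ?_⟩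
          · exact hz2
          · show q y < q z
            exact lt_of_lt_of_le hqyx (not_lt.mp hc)
      · intro z1 hz1 z2 hz2 heq
        rw [Finset.mem_coe, hT, Finset.mem_filter] at hz1 hz2
        simp only at heq
        split_ifs at heq with h1 h2 h2 <;>
          rw [Prod.mk.injEq] at heq
        · exact heq.2
        · exfalso
          obtain ⟨e1, e2⟩ := heq
          subst e2
          exact absurd hz1.2.2 (lt_irrefl _)
        · exfalso
          obtain ⟨e1, e2⟩ := heq
          subst e2
          exact absurd hz2.2.2 (lt_irrefl _)
        · exact heq.1
    have hfinal : (p y : ℕ) - (p x : ℕ) ≤ δ := le_trans (le_trans hcard hTD) hq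
    simp only [rank]
    push_cast
    omega
  · rintro (hp | hδ)
    · exact ⟨p, by simp [dKT_self], hp⟩
    by_cases hp : prefers p y x
    · exact ⟨p, by simp [dKT_self], hp⟩
    have hpxy : (p x : ℕ) < (p y : ℕ) := by
      have : ¬ ((p y : ℕ) < (p x : ℕ)) := hp
      omega
    have hk : (p y : ℕ) - (p x : ℕ) ≤ δ := by
      simp only [rank] at hδ
      omega
    set σ := movePerm (p y) (p x) with hσ
    refine ⟨p.trans σ, ?_, ?_⟩
    · -- dKT bound
      have key : ∀ z1 z2 : A, prefers p z1 z2 → prefers (p.trans σ) z2 z1 →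
          z2 = y ∧ (p x : ℕ) ≤ (p z1 : ℕ) ∧ (p z1 : ℕ) < (p y : ℕ) := by
        intro z1 z2 h12 h21
        have ht12 : (p z1 : ℕ) < (p z2 : ℕ) := h12
        have hs : (σ (p z2) : ℕ) < (σ (p z1) : ℕ) := h21
        have hz2y : z2 = y := by
          by_contra hne2
          have ht2 : p z2 ≠ p y := fun h => hne2 (p.injective h)
          have h2c := movePerm_coe (p y) (p x) (p z2) ht2 (Nat.le_of_lt hpxy)
          by_cases ht1 : p z1 = p y
          · rw [ht1] at ht12
            rw [hσ, ht1, movePerm_apply_self, h2c] at hs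
            split_ifs at hs <;> omega
          · have h1c := movePerm_coe (p y) (p x) (p z1) ht1 (Nat.le_of_lt hpxy)
            rw [hσ, h1c, h2c] at hs
            split_ifs at hs <;> omega
        refine ⟨hz2y, ?_⟩
        have hpz2 : p z2 = p y := congrArg p hz2y
        have ht1 : p z1 ≠ p y := by
          rw [← hpz2]; exact ne_of_lt (Fin.lt_def.mpr ht12)
        have h1c := movePerm_coe (p y) (p x) (p z1) ht1 (Nat.le_of_lt hpxy)
        rw [hσ, hpz2, movePerm_apply_self, h1c] at hs
        split_ifs at hs <;> omega
      have hD : dKT p (p.trans σ) ≤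
          (Finset.univ.filter
            (fun z : A => (p x : ℕ) ≤ (p z : ℕ) ∧ (p z : ℕ) < (p y : ℕ))).card := by
        rw [dKT]
        apply Finset.card_le_card_of_injOn (fun z => z.1)
        · rintro ⟨z1, z2⟩ hz
          rw [Finset.mem_coe, Finset.mem_filter] at hz
          obtain ⟨-, h12, h21⟩ := hz
          obtain ⟨-, hb⟩ := key z1 z2 h12 h21
          rw [Finset.mem_coe, Finset.mem_filter]
          exact ⟨Finset.mem_univ _, hb⟩
        · rintro ⟨z1, z2⟩ hz ⟨w1, w2⟩ hw heq
          rw [Finset.mem_coe, Finset.mem_filter] at hz hw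
          obtain ⟨hz2, -⟩ := key z1 z2 hz.2.1 hz.2.2
          obtain ⟨hw2, -⟩ := key w1 w2 hw.2.1 hw.2.2
          simp only at heq
          rw [Prod.mk.injEq]
          exact ⟨heq, hz2.trans hw2.symm⟩
      have hI : (Finset.univ.filter
          (fun z : A => (p x : ℕ) ≤ (p z : ℕ) ∧ (p z : ℕ) < (p y : ℕ))).card ≤
          (p y : ℕ) - (p x : ℕ) := by
        rw [← Nat.card_Ico (p x : ℕ) (p y : ℕ)]
        apply Finset.card_le_card_of_injOn (fun z => (p z : ℕ))
        · intro z hz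
          rw [Finset.mem_coe, Finset.mem_filter] at hz
          rw [Finset.mem_coe, Finset.mem_Ico]
          exact hz.2
        · intro z1 _ z2 _ heq
          exact p.injective (Fin.val_injective heq)
      omega
    · show p.trans σ y < p.trans σ x
      have hy : (p.trans σ) y = p x := by
        simp only [Equiv.trans_apply, hσ, movePerm_apply_self]
      have hx : ((p.trans σ) x : ℕ) = (p x : ℕ) + 1 := by
        simp only [Equiv.trans_apply, hσ]
        rw [movePerm_coe (p y) (p x) (p x) (fun h => hne (congrArg Fin.val h))
          (Nat.le_of_lt hpxy)]
        rw [if_neg (by omega)]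
      rw [Fin.lt_def, hy, hx]
      omega
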